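/- With V = V₋₁ ⊕ V₀ ⊕ V₁ (one-dimensional components u, v, w) and structure constants aₙ, bₙ, cₙ, Jₙ(u⊗u⊗w^{⊗(n−2)}) = Σ_{p=1}^{n−1} (−1)^{p(n−p)}·(−2)·C(n−2, p−1) b_p a_{n−p+1} · u. -/

import Mathlib

open Finset Equiv

/-- Sign `(-1)^z` for an integer `z`, valued in a field. -/
def ksign (K : Type*) [Field K] (z : ℤ) : K := if Even z then 1 else -1

/-- The Koszul sign `χ(σ)` of a permutation acting on a list of basis elements
with degrees given by `d`. -/
def chi (K : Type*) [Field K] (d : Fin 3 → ℤ) (xs : List (Fin 3))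
    (σ : Perm (Fin xs.length)) : K :=
  ((Perm.sign σ : ℤ) : K) *
    ∏ p ∈ Finset.univ.filter
      (fun p : Fin xs.length × Fin xs.length => p.1 < p.2 ∧ σ p.2 < σ p.1),
      ksign K (d (xs.get (σ p.1)) * d (xs.get (σ p.2)))

/-- `(p, n-p)`-unshuffles in `S_n`. -/
def unshuffles (p n : ℕ) : Finset (Perm (Fin n)) :=
  Finset.univ.filter (fun σ =>
    (∀ i j : Fin n, i < j → (j : ℕ) < p → σ i < σ j) ∧
    (∀ i j : Fin n, p ≤ (i : ℕ) → i < j → σ i < σ j))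

/-- The Koszul sign picked up when sorting a list of basis elements into
canonical (increasing) order; degrees given by `d`. -/
def sortSign (K : Type*) [Field K] (d : Fin 3 → ℤ) (xs : List (Fin 3)) : K :=
  ∏ p ∈ Finset.univ.filter
    (fun p : Fin xs.length × Fin xs.length => p.1 < p.2 ∧ xs.get p.2 < xs.get p.1),
    (-(ksign K (d (xs.get p.1) * d (xs.get p.2))))

/-- The generalized Jacobi expression `Jₙ = Σ_p (-1)^{p(n-p)} l_{n-p+1} ∘ l_p`,
evaluated on a basis tensor `xs` (so `n = xs.length`), where `ell` gives the
value of each `l_m` on basis tensors (as a coordinate vector in `Fin 3 → K`),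
extended by unshuffles with Koszul signs. -/
def Jac (K : Type*) [Field K] (d : Fin 3 → ℤ) (ell : List (Fin 3) → (Fin 3 → K))
    (xs : List (Fin 3)) : Fin 3 → K :=
  ∑ p ∈ Finset.Icc 1 xs.length, ((-1 : K) ^ (p * (xs.length - p))) •
    ∑ σ ∈ unshuffles p xs.length,
      chi K d xs σ •
        (fun j : Fin 3 => ∑ i : Fin 3,
          ell ((List.ofFn (fun t => xs.get (σ t))).take p) i *
          ell (i :: (List.ofFn (fun t => xs.get (σ t))).drop p) j)

/-- The operators on `V₀ ⊕ V₁ ⊕ V₂` (basis `v = 0, w = 1, x = 2`) determined by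
constants `a, b, c`:  `lₙ(v⊗w^{n-1}) = aₙ w`, `lₙ(w^n) = bₙ x`,
`lₙ(v⊗w^{n-2}⊗x) = cₙ x`, all other values zero, extended skew-symmetrically. -/
def ell012 {K : Type*} [Field K] (a b c : ℕ → K) (xs : List (Fin 3)) : Fin 3 → K :=
  sortSign K ![0, 1, 2] xs •
    (if xs.count 0 = 1 ∧ xs.count 2 = 0 then
        (fun j : Fin 3 => if j = 1 then a xs.length else 0)
      else if xs.count 0 = 0 ∧ xs.count 2 = 0 then
        (fun j : Fin 3 => if j = 2 then b xs.length else 0)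
      else if xs.count 0 = 1 ∧ xs.count 2 = 1 then
        (fun j : Fin 3 => if j = 2 then c xs.length else 0)
      else 0)

/-- The operators on `V₋₁ ⊕ V₀ ⊕ V₁` (basis `u = 0, v = 1, w = 2`, of degrees
`-1, 0, 1`) determined by constants `a, b, c`:  `lₙ(u⊗v⊗w^{n-2}) = aₙ u`,
`lₙ(u⊗w^{n-1}) = bₙ v`, `lₙ(v⊗w^{n-1}) = cₙ w`, all other values zero,
extended skew-symmetrically. -/
def ellm {K : Type*} [Field K] (a b c : ℕ → K) (xs : List (Fin 3)) : Fin 3 → K :=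
  sortSign K ![-1, 0, 1] xs •
    (if xs.count 0 = 1 ∧ xs.count 1 = 1 then
        (fun j : Fin 3 => if j = 0 then a xs.length else 0)
      else if xs.count 0 = 1 ∧ xs.count 1 = 0 then
        (fun j : Fin 3 => if j = 1 then b xs.length else 0)
      else if xs.count 0 = 0 ∧ xs.count 1 = 1 then
        (fun j : Fin 3 => if j = 2 then c xs.length else 0)
      else 0)

section Lemmas
variable {K : Type*} [Field K]

lemma sign_eq_signAux {n : ℕ} (σ : Perm (Fin n)) : Perm.sign σ = Perm.signAux σ := by
  refine Equiv.Perm.swap_induction_on σ (by simp [Equiv.Perm.signAux_one]) ?_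
  intro f x y hxy ih
  rw [Equiv.Perm.sign_mul, Equiv.Perm.signAux_mul, ih, Equiv.Perm.sign_swap hxy,
    Equiv.Perm.signAux_swap hxy]

lemma signAux_eq_pow {n : ℕ} (σ : Perm (Fin n)) :
    Perm.signAux σ =
      (-1 : ℤˣ) ^ ((Finset.univ.filter
        (fun p : Fin n × Fin n => p.1 < p.2 ∧ σ p.2 < σ p.1)).card) := by
  unfold Equiv.Perm.signAux
  rw [Finset.prod_ite _ _, Finset.prod_const, Finset.prod_const_one, mul_one]
  congr 1
  apply Finset.card_nbij' (fun x => (x.2, x.1)) (fun p => ⟨p.2, p.1⟩)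
  · intro x hx
    simp only [Finset.coe_filter, Set.mem_setOf_eq, Finset.mem_coe, Finset.mem_filter, Equiv.Perm.mem_finPairsLT, Finset.mem_univ, true_and] at hx ⊢
    refine ⟨hx.1, lt_of_le_of_ne hx.2 ?_⟩
    exact fun h => absurd (σ.injective h) (ne_of_gt hx.1)
  · intro p hp
    simp only [Finset.coe_filter, Set.mem_setOf_eq, Finset.mem_coe, Finset.mem_filter, Equiv.Perm.mem_finPairsLT, Finset.mem_univ, true_and] at hp ⊢
    exact ⟨hp.1, le_of_lt hp.2⟩
  · intro x _; rfl
  · intro p _; rfl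

lemma ksign_oddodd (x y : Fin 3) (hx : x ≠ 1) (hy : y ≠ 1) :
    ksign K (![-1, 0, 1] x * ![-1, 0, 1] y) = -1 := by
  fin_cases x <;> fin_cases y <;> simp_all [ksign, Int.even_iff] <;> norm_num

lemma chi_eq_one (xs : List (Fin 3)) (hxs : ∀ i, xs.get i ≠ 1)
    (σ : Perm (Fin xs.length)) : chi K ![-1, 0, 1] xs σ = 1 := by
  unfold chi
  rw [sign_eq_signAux, signAux_eq_pow]
  rw [Finset.prod_congr rfl (g := fun _ => (-1 : K))
    (fun p _ => ksign_oddodd _ _ (hxs _) (hxs _)), Finset.prod_const]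
  push_cast
  rw [← pow_add]
  exact Even.neg_one_pow ⟨_, rfl⟩

lemma sortSign_no_one (xs : List (Fin 3)) (hxs : ∀ i, xs.get i ≠ 1) :
    sortSign K ![-1, 0, 1] xs = 1 := by
  unfold sortSign
  apply Finset.prod_eq_one
  intro p _
  rw [ksign_oddodd _ _ (hxs _) (hxs _), neg_neg]

lemma count_eq_card (l : List (Fin 3)) (x : Fin 3) :
    l.count x = (Finset.univ.filter fun i : Fin l.length => l.get i = x).card := by
  induction l with
  | nil => simp
  | cons y l ih =>
      rw [List.count_cons, Finset.card_filter]
      simp only [List.length_cons]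
      rw [Fin.sum_univ_succ]
      have hsucc : ∀ i : Fin l.length, ((y :: l).get i.succ) = l.get i := fun i => rfl
      simp only [hsucc, List.get_cons_zero]
      rw [← Finset.card_filter, ← ih]
      · rw [add_comm]
        congr 1
        by_cases h : y = x <;> simp [h, beq_iff_eq]

lemma get_one_cons_eq_one (zs : List (Fin 3)) (hz : ∀ i, zs.get i ≠ 1) :
    ∀ i : Fin ((1 : Fin 3) :: zs).length, ((1 : Fin 3) :: zs).get i = 1 → (i : ℕ) = 0 := by
  rintro ⟨v, hv⟩ h
  match v with
  | 0 => rfl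
  | k + 1 => exact absurd h (hz ⟨k, by simpa using hv⟩)

lemma sortSign_one_cons (zs : List (Fin 3)) (hz : ∀ i, zs.get i ≠ 1)
    (hc : zs.count 0 = 1) : sortSign K ![-1, 0, 1] ((1 : Fin 3) :: zs) = -1 := by
  set ys := (1 : Fin 3) :: zs with hys
  unfold sortSign
  have hfac : ∀ q ∈ Finset.univ.filter (fun p : Fin ys.length × Fin ys.length =>
      p.1 < p.2 ∧ ys.get p.2 < ys.get p.1),
      -(ksign K (![-1, 0, 1] (ys.get q.1) * ![-1, 0, 1] (ys.get q.2)))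
        = (if ys.get q.1 = 1 then (-1 : K) else 1) := by
    intro p hp
    simp only [Finset.mem_filter, Finset.mem_univ, true_and] at hp
    by_cases h1 : ys.get p.1 = 1
    · have h0 : ys.get p.2 = 0 := by
        have hv : ((ys.get p.2 : Fin 3) : ℕ) < ((ys.get p.1 : Fin 3) : ℕ) := hp.2
        rw [h1] at hv
        simpa using hv
      rw [h1, h0, if_pos rfl]
      norm_num [ksign]
    · have h2 : ys.get p.2 ≠ 1 := by
        intro h
        have := get_one_cons_eq_one zs hz p.2 h
        have hpos : (0 : ℕ) < (p.2 : ℕ) := lt_of_le_of_lt (Nat.zero_le _) hp.1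
        omega
      rw [if_neg h1, ksign_oddodd _ _ h1 h2, neg_neg]
  rw [Finset.prod_congr rfl hfac]
  · rw [Finset.prod_ite, Finset.prod_const, Finset.prod_const_one, mul_one,
      Finset.filter_filter]
    have hcard : (Finset.univ.filter fun p : Fin ys.length × Fin ys.length =>
        (p.1 < p.2 ∧ ys.get p.2 < ys.get p.1) ∧ ys.get p.1 = 1).card = 1 := by
      rw [← hc, count_eq_card]
      refine (Finset.card_nbij (i := fun (i : Fin zs.length) =>
        (((⟨0, Nat.succ_pos _⟩ : Fin ys.length) : Fin ys.length), (i.succ : Fin ys.length)))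
        ?_ ?_ ?_).symm
      · intro i hi
        simp only [Finset.coe_filter, Set.mem_setOf_eq, Finset.mem_coe, Finset.mem_filter, Finset.mem_univ, true_and] at hi ⊢
        have h2 : ys.get (Fin.succ i : Fin ys.length) = zs.get i := rfl
        have h1 : ys.get (⟨0, Nat.succ_pos _⟩ : Fin ys.length) = 1 := rfl
        refine ⟨⟨Fin.succ_pos i, ?_⟩, h1⟩
        rw [h2, hi, h1]
        decide
      · intro i _ i' _ h
        simpa [Prod.ext_iff, Fin.succ_inj] using h
      · rintro ⟨q1, q2⟩ hq
        simp only [Finset.coe_filter, Set.mem_setOf_eq, Finset.mem_univ, true_and] at hq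
        obtain ⟨⟨h12, hlt⟩, hone⟩ := hq
        have hq1 : q1 = ⟨0, Nat.succ_pos _⟩ := Fin.ext (get_one_cons_eq_one zs hz q1 hone)
        obtain ⟨v, hv⟩ := q2
        match v, hv with
        | 0, hv => exact absurd (hq1 ▸ h12) (by simp [hq1, Fin.lt_def])
        | k + 1, hv =>
            have hget : ys.get ⟨k + 1, hv⟩ = zs.get ⟨k, by simpa using hv⟩ := rfl
            have h0 : zs.get ⟨k, by simpa using hv⟩ = 0 := by
              have h3 := hlt
              rw [hone, hget] at h3
              have hvlt : ((zs.get ⟨k, by simpa using hv⟩ : Fin 3) : ℕ) < 1 := h3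
              exact Fin.ext (by omega)
            refine ⟨⟨k, by simpa using hv⟩, ?_, ?_⟩
            · simp only [Finset.mem_coe, Finset.mem_filter, Finset.mem_univ, true_and]
              exact h0
            · simp only [Prod.mk.injEq]
              exact ⟨hq1.symm, Fin.ext (by simp)⟩
    rw [hcard, pow_one]

lemma get_take_ofFn {N : ℕ} (f : Fin N → Fin 3) (p : ℕ)
    (i : Fin ((List.ofFn f).take p).length) :
    ((List.ofFn f).take p).get i
      = f ⟨(i : ℕ), by have := i.2; simp [List.length_take] at this; omega⟩ := by
  rw [List.get_eq_getElem, List.getElem_take, List.getElem_ofFn]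

lemma get_drop_ofFn {N : ℕ} (f : Fin N → Fin 3) (p : ℕ)
    (i : Fin ((List.ofFn f).drop p).length) :
    ((List.ofFn f).drop p).get i
      = f ⟨p + (i : ℕ), by have := i.2; simp [List.length_drop] at this; omega⟩ := by
  rw [List.get_eq_getElem, List.getElem_drop, List.getElem_ofFn]

lemma count_take_ofFn {N : ℕ} (f : Fin N → Fin 3) {p : ℕ} (hp : p ≤ N) (x : Fin 3) :
    ((List.ofFn f).take p).count x
      = (Finset.univ.filter fun t : Fin N => (t : ℕ) < p ∧ f t = x).card := by
  rw [count_eq_card]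
  have hlen : ((List.ofFn f).take p).length = p := by simp [List.length_take, hp]
  apply Finset.card_bij'
    (i := fun (a : Fin (((List.ofFn f).take p).length)) _ =>
      (⟨(a : ℕ), lt_of_lt_of_le (lt_of_lt_of_le a.2 hlen.le) hp⟩ : Fin N))
    (j := fun t ht => (⟨(t : ℕ), by
      simp only [Finset.mem_filter, Finset.mem_univ, true_and] at ht
      omega⟩ : Fin (((List.ofFn f).take p).length)))
  case hi =>
    intro a ha
    simp only [Finset.mem_filter, Finset.mem_univ, true_and] at ha ⊢
    exact ⟨lt_of_lt_of_le a.2 hlen.le, (get_take_ofFn f p a).symm.trans ha⟩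
  case hj =>
    intro t ht
    simp only [Finset.mem_filter, Finset.mem_univ, true_and] at ht ⊢
    exact (get_take_ofFn f p _).trans ht.2
  case left_inv => intro a _; exact Fin.ext rfl
  case right_inv => intro t _; exact Fin.ext rfl

lemma count_drop_ofFn {N : ℕ} (f : Fin N → Fin 3) (p : ℕ) (x : Fin 3) :
    ((List.ofFn f).drop p).count x
      = (Finset.univ.filter fun t : Fin N => p ≤ (t : ℕ) ∧ f t = x).card := by
  rw [count_eq_card]
  have hlen : ((List.ofFn f).drop p).length = N - p := by simp [List.length_drop]
  apply Finset.card_bij'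
    (i := fun (a : Fin (((List.ofFn f).drop p).length)) _ =>
      (⟨p + (a : ℕ), by have h2 := a.2; have h3 := hlen; omega⟩ : Fin N))
    (j := fun t ht => (⟨(t : ℕ) - p, by
      simp only [Finset.mem_filter, Finset.mem_univ, true_and] at ht
      have := t.2; have h3 := hlen; omega⟩ : Fin (((List.ofFn f).drop p).length)))
  case hi =>
    intro a ha
    simp only [Finset.mem_filter, Finset.mem_univ, true_and] at ha ⊢
    exact ⟨Nat.le_add_right _ _, (get_drop_ofFn f p a).symm.trans ha⟩
  case hj =>
    intro t ht
    simp only [Finset.mem_filter, Finset.mem_univ, true_and] at ht ⊢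
    refine (get_drop_ofFn f p _).trans ?_
    have he : ∀ (h : p + ((t : ℕ) - p) < N), (⟨p + ((t : ℕ) - p), h⟩ : Fin N) = t := by
      intro h
      apply Fin.ext
      show p + ((t : ℕ) - p) = (t : ℕ)
      have := ht.1; omega
    rw [he]
    exact ht.2
  case left_inv =>
    intro a _
    apply Fin.ext
    show (p + (a : ℕ)) - p = (a : ℕ)
    omega
  case right_inv =>
    intro t ht
    simp only [Finset.mem_filter, Finset.mem_univ, true_and] at ht
    apply Fin.ext
    show p + ((t : ℕ) - p) = (t : ℕ)
    have := ht.1; omega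


section Comb
variable {N p : ℕ}

/-- the image of the first block -/
def imSet (p : ℕ) {N : ℕ} (σ : Perm (Fin N)) : Finset (Fin N) :=
  Finset.univ.filter (fun x => ((σ.symm x) : ℕ) < p)

lemma card_filter_apply (σ : Perm (Fin N)) (r : Fin N → Prop) [DecidablePred r] :
    (Finset.univ.filter fun t => r (σ t)).card = (Finset.univ.filter r).card := by
  apply Finset.card_bij' (i := fun t (_ : t ∈ _) => σ t) (j := fun x (_ : x ∈ _) => σ.symm x)
  case hi => intro t ht; simpa using (Finset.mem_filter.mp ht).2
  case hj => intro x hx; simpa using (Finset.mem_filter.mp hx).2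
  case left_inv => intro t _; simp
  case right_inv => intro x _; simp

lemma card_filter_lt (hp : p ≤ N) :
    (Finset.univ.filter fun t : Fin N => (t : ℕ) < p).card = p := by
  rw [← Finset.card_range p]
  apply Finset.card_bij' (i := fun (t : Fin N) (_ : t ∈ _) => (t : ℕ))
    (j := fun k hk => (⟨k, lt_of_lt_of_le (Finset.mem_range.mp hk) hp⟩ : Fin N))
  case hi => intro t ht; simpa using (Finset.mem_filter.mp ht).2
  case hj => intro k hk; simp [Finset.mem_range.mp hk]
  case left_inv => intro t _; exact Fin.ext rfl
  case right_inv => intro k _; rfl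

lemma card_imSet (σ : Perm (Fin N)) (hp : p ≤ N) : (imSet p σ).card = p := by
  unfold imSet
  have h := card_filter_apply (σ := σ.symm) (r := fun t : Fin N => (t : ℕ) < p)
  rw [h, card_filter_lt hp]

lemma A_eq_imSet (σ : Perm (Fin N)) :
    (Finset.univ.filter fun t : Fin N => (t : ℕ) < p ∧ ((σ t) : ℕ) < 2).card
      = ((imSet p σ).filter fun x : Fin N => (x : ℕ) < 2).card := by
  unfold imSet
  rw [Finset.filter_filter]
  have h := card_filter_apply (σ := σ)
    (r := fun x : Fin N => ((σ.symm x) : ℕ) < p ∧ (x : ℕ) < 2)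
  simp only [Equiv.symm_apply_apply] at h
  rw [← h]

def permOfFun (S : Finset (Fin N)) (hS : S.card = p) (hp : p ≤ N) : Fin N → Fin N :=
  fun t => if ht : (t : ℕ) < p then S.orderEmbOfFin hS ⟨t, ht⟩
    else Sᶜ.orderEmbOfFin (by rw [Finset.card_compl, hS, Fintype.card_fin])
      ⟨(t : ℕ) - p, by have := t.2; omega⟩

lemma permOfFun_injective (S : Finset (Fin N)) (hS : S.card = p) (hp : p ≤ N) :
    Function.Injective (permOfFun S hS hp) := by
  intro t s h
  unfold permOfFun at h
  split_ifs at h with h1 h2 h2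
  · exact Fin.ext (by simpa [Fin.ext_iff] using (S.orderEmbOfFin hS).injective h)
  · exact absurd (h ▸ S.orderEmbOfFin_mem hS ⟨t, h1⟩)
      (Finset.mem_compl.mp (Sᶜ.orderEmbOfFin_mem _ _))
  · exact absurd (h.symm ▸ S.orderEmbOfFin_mem hS ⟨s, h2⟩)
      (Finset.mem_compl.mp (Sᶜ.orderEmbOfFin_mem _ _))
  · have := (Sᶜ.orderEmbOfFin _).injective h
    have hval : (t : ℕ) - p = (s : ℕ) - p := by simpa [Fin.ext_iff] using this
    exact Fin.ext (by omega)

noncomputable def permOf (S : Finset (Fin N)) (hS : S.card = p) (hp : p ≤ N) : Perm (Fin N) :=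
  Equiv.ofBijective _ (Finite.injective_iff_bijective.mp (permOfFun_injective S hS hp))

lemma permOf_apply (S : Finset (Fin N)) (hS : S.card = p) (hp : p ≤ N) (t : Fin N) :
    permOf S hS hp t = permOfFun S hS hp t := rfl

lemma permOf_mem_iff (S : Finset (Fin N)) (hS : S.card = p) (hp : p ≤ N) (t : Fin N) :
    permOf S hS hp t ∈ S ↔ (t : ℕ) < p := by
  rw [permOf_apply]
  unfold permOfFun
  split_ifs with ht
  · simp [S.orderEmbOfFin_mem hS, ht]
  · simp only [ht, iff_false]
    exact Finset.mem_compl.mp (Sᶜ.orderEmbOfFin_mem _ _)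

lemma permOf_unshuffle (S : Finset (Fin N)) (hS : S.card = p) (hp : p ≤ N) :
    permOf S hS hp ∈ unshuffles p N := by
  simp only [unshuffles, Finset.mem_filter, Finset.mem_univ, true_and]
  constructor
  · intro i j hij hj
    have hi : (i : ℕ) < p := lt_trans hij hj
    rw [permOf_apply, permOf_apply]
    unfold permOfFun
    rw [dif_pos hi, dif_pos hj]
    exact (S.orderEmbOfFin hS).strictMono (by exact hij)
  · intro i j hi hij
    have hj : p ≤ (j : ℕ) := le_trans hi (le_of_lt hij)
    rw [permOf_apply, permOf_apply]
    unfold permOfFun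
    rw [dif_neg (by omega), dif_neg (by omega)]
    exact (Sᶜ.orderEmbOfFin _).strictMono (by simp [Fin.lt_def]; omega)

lemma imSet_permOf (S : Finset (Fin N)) (hS : S.card = p) (hp : p ≤ N) :
    imSet p (permOf S hS hp) = S := by
  ext x
  simp only [imSet, Finset.mem_filter, Finset.mem_univ, true_and]
  rw [← permOf_mem_iff S hS hp ((permOf S hS hp).symm x), Equiv.apply_symm_apply]

lemma unshuffle_eq_permOf {σ : Perm (Fin N)} (hσ : σ ∈ unshuffles p N) (hp : p ≤ N) :
    σ = permOf (imSet p σ) (card_imSet σ hp) hp := by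
  simp only [unshuffles, Finset.mem_filter, Finset.mem_univ, true_and] at hσ
  obtain ⟨h1, h2⟩ := hσ
  apply Equiv.ext
  intro t
  rw [permOf_apply]
  unfold permOfFun
  split_ifs with ht
  · have hf : (fun x : Fin p => σ ⟨(x : ℕ), lt_of_lt_of_le x.2 hp⟩)
        = ⇑((imSet p σ).orderEmbOfFin (card_imSet σ hp)) := by
      apply Finset.orderEmbOfFin_unique
      · intro x
        simp only [imSet, Finset.mem_filter, Finset.mem_univ, true_and,
          Equiv.symm_apply_apply]
        exact x.2
      · intro x y hxy
        exact h1 _ _ (Fin.mk_lt_mk.mpr (show (x : ℕ) < (y : ℕ) from hxy)) y.2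
    have := congrFun hf ⟨(t : ℕ), ht⟩
    rw [← this]
  · have hf : (fun x : Fin (N - p) => σ ⟨p + (x : ℕ), by have := x.2; omega⟩)
        = ⇑((imSet p σ)ᶜ.orderEmbOfFin (by
            rw [Finset.card_compl, card_imSet σ hp, Fintype.card_fin])) := by
      apply Finset.orderEmbOfFin_unique
      · intro x
        simp only [Finset.mem_compl, imSet, Finset.mem_filter, Finset.mem_univ, true_and,
          Equiv.symm_apply_apply]
        omega
      · intro x y hxy
        refine h2 _ _ (show p ≤ p + (x : ℕ) from Nat.le_add_right p _) ?_
        exact Fin.mk_lt_mk.mpr (by have := Fin.lt_def.mp hxy; omega)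
    have := congrFun hf ⟨(t : ℕ) - p, by have := t.2; omega⟩
    rw [← this]
    exact congrArg σ (Fin.ext (show (t : ℕ) = p + ((t : ℕ) - p) by omega))

lemma card_unshuffles_filter (hp : p ≤ N) :
    ((unshuffles p N).filter fun σ =>
        (Finset.univ.filter fun t : Fin N => (t : ℕ) < p ∧ ((σ t) : ℕ) < 2).card = 1).card
      = ((Finset.univ : Finset (Finset (Fin N))).filter fun S =>
          S.card = p ∧ (S.filter fun x : Fin N => (x : ℕ) < 2).card = 1).card := by
  apply Finset.card_bij' (i := fun σ (_ : σ ∈ _) => imSet p σ)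
    (j := fun S hS => permOf S (by
      simp only [Finset.mem_filter, Finset.mem_univ, true_and] at hS
      exact hS.1) hp)
  case hi =>
    intro σ hσ
    simp only [Finset.mem_filter, Finset.mem_univ, true_and] at hσ ⊢
    exact ⟨card_imSet σ hp, by rw [← A_eq_imSet σ]; exact hσ.2⟩
  case hj =>
    intro S hS
    simp only [Finset.mem_filter, Finset.mem_univ, true_and] at hS ⊢
    refine ⟨permOf_unshuffle S hS.1 hp, ?_⟩
    rw [A_eq_imSet, imSet_permOf]
    exact hS.2
  case left_inv =>
    intro σ hσ
    simp only [Finset.mem_filter] at hσ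
    exact (unshuffle_eq_permOf hσ.1 hp).symm
  case right_inv =>
    intro S hS
    simp only [Finset.mem_filter, Finset.mem_univ, true_and] at hS
    exact imSet_permOf S hS.1 hp

lemma card_small (hN : 2 ≤ N) :
    (Finset.univ.filter fun x : Fin N => (x : ℕ) < 2).card = 2 := by
  have : (Finset.univ.filter fun x : Fin N => (x : ℕ) < 2)
      = {(⟨0, by omega⟩ : Fin N), ⟨1, by omega⟩} := by
    ext x
    simp only [Finset.mem_filter, Finset.mem_univ, true_and, Finset.mem_insert,
      Finset.mem_singleton, Fin.ext_iff]
    omega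
  rw [this, Finset.card_pair (by simp [Fin.ext_iff])]

lemma card_D (hN : 2 ≤ N) :
    (Finset.univ.filter fun x : Fin N => ¬ (x : ℕ) < 2).card = N - 2 := by
  have h := Finset.card_filter_add_card_filter_not
    (s := (Finset.univ : Finset (Fin N))) (fun x : Fin N => (x : ℕ) < 2)
  rw [card_small hN, Finset.card_univ, Fintype.card_fin] at h
  omega

lemma card_piece (hN : 2 ≤ N) (hp1 : 1 ≤ p) (e : Fin N) (he : (e : ℕ) < 2) :
    ((Finset.univ : Finset (Finset (Fin N))).filter fun S =>
        S.card = p ∧ (S.filter fun x : Fin N => (x : ℕ) < 2) = {e}).card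
      = (N - 2).choose (p - 1) := by
  rw [← card_D hN, ← Finset.card_powersetCard (p - 1)
    (Finset.univ.filter fun x : Fin N => ¬ (x : ℕ) < 2)]
  apply Finset.card_bij' (i := fun S (_ : S ∈ _) => S.erase e)
    (j := fun T (_ : T ∈ _) => insert e T)
  case hi =>
    intro S hS
    simp only [Finset.mem_filter, Finset.mem_univ, true_and] at hS
    obtain ⟨hcard, hfil⟩ := hS
    have heS : e ∈ S := by
      have : e ∈ S.filter fun x : Fin N => (x : ℕ) < 2 := by rw [hfil]; exact Finset.mem_singleton_self e
      exact Finset.mem_of_mem_filter e this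
    rw [Finset.mem_powersetCard]
    constructor
    · intro x hx
      obtain ⟨hxe, hxS⟩ := Finset.mem_erase.mp hx
      simp only [Finset.mem_filter, Finset.mem_univ, true_and]
      intro hx2
      exact hxe (by
        have : x ∈ S.filter fun y : Fin N => (y : ℕ) < 2 := Finset.mem_filter.mpr ⟨hxS, hx2⟩
        rw [hfil] at this
        exact Finset.mem_singleton.mp this)
    · rw [Finset.card_erase_of_mem heS, hcard]
  case hj =>
    intro T hT
    rw [Finset.mem_powersetCard] at hT
    obtain ⟨hTD, hTcard⟩ := hT
    have heT : e ∉ T := by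
      intro h
      have := hTD h
      simp only [Finset.mem_filter, Finset.mem_univ, true_and] at this
      exact this he
    simp only [Finset.mem_filter, Finset.mem_univ, true_and]
    constructor
    · rw [Finset.card_insert_of_notMem heT, hTcard]
      omega
    · ext x
      simp only [Finset.mem_filter, Finset.mem_insert, Finset.mem_singleton]
      constructor
      · rintro ⟨hx1 | hx2, hx3⟩
        · exact hx1
        · exact absurd hx3 (by
            have := hTD hx2
            simp only [Finset.mem_filter, Finset.mem_univ, true_and] at this
            exact this)
      · rintro rfl
        exact ⟨Or.inl rfl, he⟩
  case left_inv =>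
    intro S hS
    simp only [Finset.mem_filter, Finset.mem_univ, true_and] at hS
    apply Finset.insert_erase
    have : e ∈ S.filter fun x : Fin N => (x : ℕ) < 2 := by
      rw [hS.2]; exact Finset.mem_singleton_self e
    exact Finset.mem_of_mem_filter e this
  case right_inv =>
    intro T hT
    rw [Finset.mem_powersetCard] at hT
    apply Finset.erase_insert
    intro h
    have := hT.1 h
    simp only [Finset.mem_filter, Finset.mem_univ, true_and] at this
    exact this he

lemma card_subsets (hN : 2 ≤ N) (hp1 : 1 ≤ p) :
    ((Finset.univ : Finset (Finset (Fin N))).filter fun S =>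
        S.card = p ∧ (S.filter fun x : Fin N => (x : ℕ) < 2).card = 1).card
      = 2 * (N - 2).choose (p - 1) := by
  set e0 : Fin N := ⟨0, by omega⟩ with he0
  set e1 : Fin N := ⟨1, by omega⟩ with he1
  have hsub : ∀ S : Finset (Fin N), (S.filter fun x : Fin N => (x : ℕ) < 2) ⊆ {e0, e1} := by
    intro S x hx
    have := (Finset.mem_filter.mp hx).2
    simp only [Finset.mem_insert, Finset.mem_singleton, Fin.ext_iff, he0, he1]
    omega
  have hsplit : ∀ S : Finset (Fin N), ((S.filter fun x : Fin N => (x : ℕ) < 2).card = 1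
      ↔ ((S.filter fun x : Fin N => (x : ℕ) < 2) = {e0} ∨ (S.filter fun x : Fin N => (x : ℕ) < 2) = {e1})) := by
    intro S
    constructor
    · intro h
      obtain ⟨a, ha⟩ := Finset.card_eq_one.mp h
      have : a ∈ ({e0, e1} : Finset (Fin N)) := hsub S (ha ▸ Finset.mem_singleton_self a)
      rcases Finset.mem_insert.mp this with h' | h'
      · exact Or.inl (by rw [ha, h'])
      · exact Or.inr (by rw [ha, Finset.mem_singleton.mp h'])
    · rintro (h | h) <;> rw [h] <;> exact Finset.card_singleton _
  have hunion : ((Finset.univ : Finset (Finset (Fin N))).filter fun S =>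
        S.card = p ∧ (S.filter fun x : Fin N => (x : ℕ) < 2).card = 1)
      = ((Finset.univ : Finset (Finset (Fin N))).filter fun S =>
          S.card = p ∧ (S.filter fun x : Fin N => (x : ℕ) < 2) = {e0})
        ∪ ((Finset.univ : Finset (Finset (Fin N))).filter fun S =>
          S.card = p ∧ (S.filter fun x : Fin N => (x : ℕ) < 2) = {e1}) := by
    ext S
    simp only [Finset.mem_union, Finset.mem_filter, Finset.mem_univ, true_and, hsplit S]
    tauto
  have hdisj : Disjoint
      ((Finset.univ : Finset (Finset (Fin N))).filter fun S =>
        S.card = p ∧ (S.filter fun x : Fin N => (x : ℕ) < 2) = {e0})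
      ((Finset.univ : Finset (Finset (Fin N))).filter fun S =>
        S.card = p ∧ (S.filter fun x : Fin N => (x : ℕ) < 2) = {e1}) := by
    rw [Finset.disjoint_left]
    intro S h1 h2
    simp only [Finset.mem_filter, Finset.mem_univ, true_and] at h1 h2
    have : ({e0} : Finset (Fin N)) = {e1} := h1.2.symm.trans h2.2
    have : e0 = e1 := Finset.singleton_injective this
    simp [he0, he1, Fin.ext_iff] at this
  rw [hunion, Finset.card_union_of_disjoint hdisj,
    card_piece hN hp1 e0 (by simp [he0]), card_piece hN hp1 e1 (by simp [he1])]
  omega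

end Comb
end Lemmas


def xsl (m : ℕ) : List (Fin 3) := 0 :: 0 :: List.replicate m 2

section Main
variable {K : Type*} [Field K]

lemma xsl_len (m : ℕ) : (xsl m).length = m + 2 := by simp [xsl]

lemma xsl_get (m : ℕ) : ∀ i : Fin (xsl m).length,
    (xsl m).get i = if (i : ℕ) < 2 then 0 else 2 := by
  rintro ⟨v, hv⟩
  match v, hv with
  | 0, hv => rfl
  | 1, hv => rfl
  | k + 2, hv =>
      rw [if_neg (show ¬ ((⟨k + 2, hv⟩ : Fin (xsl m).length) : ℕ) < 2 from by
        show ¬ (k + 2) < 2; omega)]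
      show (List.replicate m 2).get ⟨k, by simpa [xsl] using hv⟩ = 2
      simp

lemma xsl_get_ne_one (m : ℕ) : ∀ i : Fin (xsl m).length, (xsl m).get i ≠ 1 := by
  intro i
  rw [xsl_get]
  split_ifs <;> decide


lemma inner_val (a b c : ℕ → K) (m p : ℕ) (hp1 : 1 ≤ p) (hp2 : p ≤ (xsl m).length)
    (j : Fin 3) :
    (∑ σ ∈ unshuffles p (xsl m).length, chi K ![-1, 0, 1] (xsl m) σ *
        ∑ i : Fin 3,
          ellm a b c ((List.ofFn (fun t => (xsl m).get (σ t))).take p) i *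
          ellm a b c (i :: (List.ofFn (fun t => (xsl m).get (σ t))).drop p) j)
      = if j = 0 then
          (-2 : K) * (Nat.choose m (p - 1) : K) * b p * a ((xsl m).length - p + 1)
        else 0 := by
  have hN2 : 2 ≤ (xsl m).length := by rw [xsl_len]; omega
  have hterm : ∀ σ ∈ unshuffles p (xsl m).length,
      (chi K ![-1, 0, 1] (xsl m) σ *
        ∑ i : Fin 3,
          ellm a b c ((List.ofFn (fun t => (xsl m).get (σ t))).take p) i *
          ellm a b c (i :: (List.ofFn (fun t => (xsl m).get (σ t))).drop p) j)
      = if (Finset.univ.filter fun t : Fin (xsl m).length =>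
            (t : ℕ) < p ∧ ((σ t) : ℕ) < 2).card = 1 then
          (if j = 0 then -(b p * a ((xsl m).length - p + 1)) else 0)
        else 0 := by
    intro σ _
    rw [chi_eq_one (xsl m) (xsl_get_ne_one m) σ, one_mul]
    set f : Fin (xsl m).length → Fin 3 := fun t => (xsl m).get (σ t) with hfdef
    set A := (Finset.univ.filter fun t : Fin (xsl m).length =>
      (t : ℕ) < p ∧ ((σ t) : ℕ) < 2).card with hAdef
    have hf1 : ∀ t, f t ≠ 1 := fun t => xsl_get_ne_one m (σ t)
    have hf0 : ∀ t, (f t = 0 ↔ ((σ t) : ℕ) < 2) := by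
      intro t
      show ((xsl m).get (σ t) = 0 ↔ _)
      rw [xsl_get]
      split_ifs with h
      · exact iff_of_true rfl h
      · exact iff_of_false (by decide) h
    have cT1 : ((List.ofFn f).take p).count 1 = 0 := by
      rw [count_take_ofFn f hp2 1, Finset.card_eq_zero, Finset.filter_eq_empty_iff]
      exact fun x _ hx => hf1 x hx.2
    have cT0 : ((List.ofFn f).take p).count 0 = A := by
      rw [count_take_ofFn f hp2 0, hAdef]
      congr 1
      apply Finset.filter_congr
      intro t _
      exact and_congr_right (fun _ => hf0 t)
    have cD1 : ((List.ofFn f).drop p).count 1 = 0 := by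
      rw [count_drop_ofFn f p 1, Finset.card_eq_zero, Finset.filter_eq_empty_iff]
      exact fun x _ hx => hf1 x hx.2
    have htot : (Finset.univ.filter fun t : Fin (xsl m).length =>
        ((σ t) : ℕ) < 2).card = 2 := by
      have h := card_filter_apply (σ := σ) (r := fun x : Fin (xsl m).length => (x : ℕ) < 2)
      rw [h, card_small hN2]
    have cD0 : ((List.ofFn f).drop p).count 0 = 2 - A := by
      rw [count_drop_ofFn f p 0]
      have hsplit := Finset.card_filter_add_card_filter_not
        (s := (Finset.univ.filter fun t : Fin (xsl m).length => ((σ t) : ℕ) < 2))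
        (fun t : Fin (xsl m).length => (t : ℕ) < p)
      rw [Finset.filter_filter, Finset.filter_filter, htot] at hsplit
      have e1 : (Finset.univ.filter fun t : Fin (xsl m).length =>
          ((σ t) : ℕ) < 2 ∧ (t : ℕ) < p)
          = (Finset.univ.filter fun t : Fin (xsl m).length =>
            (t : ℕ) < p ∧ ((σ t) : ℕ) < 2) := by
        apply Finset.filter_congr; intro t _; exact and_comm
      have e2 : (Finset.univ.filter fun t : Fin (xsl m).length =>
          ((σ t) : ℕ) < 2 ∧ ¬ (t : ℕ) < p)
          = (Finset.univ.filter fun t : Fin (xsl m).length =>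
            p ≤ (t : ℕ) ∧ f t = 0) := by
        apply Finset.filter_congr; intro t _
        rw [hf0 t]
        constructor
        · exact fun h => ⟨Nat.le_of_not_lt h.2, h.1⟩
        · exact fun h => ⟨h.2, Nat.not_lt.mpr h.1⟩
      rw [e1, e2] at hsplit
      omega
    have hA2 : A ≤ 2 := by
      have hsub : (Finset.univ.filter fun t : Fin (xsl m).length =>
          (t : ℕ) < p ∧ ((σ t) : ℕ) < 2)
          ⊆ (Finset.univ.filter fun t : Fin (xsl m).length => ((σ t) : ℕ) < 2) :=
        fun x hx => Finset.mem_filter.mpr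
          ⟨Finset.mem_univ _, (Finset.mem_filter.mp hx).2.2⟩
      calc A ≤ _ := Finset.card_le_card hsub
        _ = 2 := htot
    by_cases hA : A = 1
    · rw [if_pos (hAdef ▸ hA)]
      have hTlen : ((List.ofFn f).take p).length = p := by
        simp only [List.length_take, List.length_ofFn]
        have := xsl_len m
        omega
      have hT : ellm a b c ((List.ofFn f).take p)
          = fun i : Fin 3 => if i = 1 then b p else 0 := by
        unfold ellm
        rw [cT0, hA, cT1]
        rw [if_neg (by norm_num : ¬((1 : ℕ) = 1 ∧ (0 : ℕ) = 1)),
          if_pos (⟨rfl, rfl⟩ : (1 : ℕ) = 1 ∧ (0 : ℕ) = 0)]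
        rw [sortSign_no_one ((List.ofFn f).take p)
          (fun i => by rw [get_take_ofFn]; exact hf1 _), one_smul, hTlen]
      have hconsD0 : ((1 : Fin 3) :: (List.ofFn f).drop p).count 0 = 1 := by
        rw [List.count_cons, cD0, hA]
        norm_num
      have hconsD1 : ((1 : Fin 3) :: (List.ofFn f).drop p).count 1 = 1 := by
        rw [List.count_cons, cD1]
        norm_num
      have hconsLen : ((1 : Fin 3) :: (List.ofFn f).drop p).length
          = (xsl m).length - p + 1 := by
        show ((List.ofFn f).drop p).length + 1 = (xsl m).length - p + 1
        rw [List.length_drop, List.length_ofFn]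
      have hD : ellm a b c ((1 : Fin 3) :: (List.ofFn f).drop p)
          = fun j : Fin 3 => -(if j = 0 then a ((xsl m).length - p + 1) else 0) := by
        unfold ellm
        rw [hconsD0, hconsD1]
        rw [if_pos (⟨rfl, rfl⟩ : (1 : ℕ) = 1 ∧ (1 : ℕ) = 1)]
        rw [sortSign_one_cons ((List.ofFn f).drop p)
          (fun i => by rw [get_drop_ofFn]; exact hf1 _)
          (by rw [cD0, hA]), hconsLen]
        funext j
        simp only [Pi.smul_apply, smul_eq_mul, neg_one_mul]
      rw [hT, Fin.sum_univ_three, hD]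
      simp only [show (0 : Fin 3) ≠ 1 by decide, show (2 : Fin 3) ≠ 1 by decide,
        if_false, if_pos rfl, zero_mul, add_zero, zero_add]
      split_ifs <;> ring
    · rw [if_neg (hAdef ▸ hA)]
      have hcases : A = 0 ∨ A = 2 := by omega
      have hT0 : ∀ i, ellm a b c ((List.ofFn f).take p) i = 0 := by
        intro i
        unfold ellm
        rcases hcases with h | h <;>
          rw [cT0, h, cT1, if_neg (by norm_num), if_neg (by norm_num),
            if_neg (by norm_num)] <;> simp
      simp only [hT0, zero_mul]
      rw [Finset.sum_const_zero]
  rw [Finset.sum_congr rfl hterm]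
  by_cases hj : j = 0
  · simp only [hj, if_true, if_pos]
    rw [Finset.sum_ite, Finset.sum_const, Finset.sum_const_zero, add_zero]
    rw [card_unshuffles_filter hp2, card_subsets hN2 hp1, xsl_len]
    simp only [Nat.add_sub_cancel]
    rw [nsmul_eq_mul]
    push_cast
    ring
  · simp only [hj, if_false]
    have : ∀ σ ∈ unshuffles p (xsl m).length,
        (if (Finset.univ.filter fun t : Fin (xsl m).length =>
            (t : ℕ) < p ∧ ((σ t) : ℕ) < 2).card = 1 then (0 : K) else 0) = 0 := by
      intro σ _; split_ifs <;> rfl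
    rw [Finset.sum_congr rfl this, Finset.sum_const_zero]

end Main

/-- Explicit formula for `Jₙ(u ⊗ u ⊗ w^{⊗(n-2)})` on `V₋₁ ⊕ V₀ ⊕ V₁`. -/
theorem stmt12 {K : Type*} [Field K] [CharZero K] (a b c : ℕ → K) (ha : a 1 = 0)
    (n : ℕ) (hn : 2 ≤ n) :
    Jac K ![-1, 0, 1] (ellm a b c) ((0 : Fin 3) :: 0 :: List.replicate (n - 2) 2) =
      fun j : Fin 3 => if j = 0 then
        ∑ p ∈ Finset.Icc 1 (n - 1), (-1 : K) ^ (p * (n - p)) * (-2 : K) *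
          ((n - 2).choose (p - 1) : K) * b p * a (n - p + 1)
      else 0 := by
  obtain ⟨m, rfl⟩ : ∃ m, n = m + 2 := ⟨n - 2, by omega⟩
  have hm2 : m + 2 - 2 = m := by omega
  have hm1 : m + 2 - 1 = m + 1 := by omega
  rw [hm2, hm1]
  have hxs : ((0 : Fin 3) :: 0 :: List.replicate m 2) = xsl m := rfl
  rw [hxs]
  funext j
  rw [Jac]
  simp only [Finset.sum_apply, Pi.smul_apply, smul_eq_mul]
  rw [Finset.sum_congr rfl (g := fun p => ((-1 : K)) ^ (p * ((xsl m).length - p)) *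
      (if j = 0 then
        (-2 : K) * (Nat.choose m (p - 1) : K) * b p * a ((xsl m).length - p + 1)
      else 0))
    (fun p hp => by
      rw [inner_val a b c m p (Finset.mem_Icc.mp hp).1 (Finset.mem_Icc.mp hp).2 j])]
  by_cases hj : j = 0
  · simp only [hj, if_true, if_pos]
    rw [xsl_len]
    rw [Finset.sum_Icc_succ_top (by omega : 1 ≤ m + 1 + 1)]
    have htop : ((-1 : K)) ^ ((m + 1 + 1) * (m + 2 - (m + 1 + 1))) *
        ((-2 : K) * (Nat.choose m (m + 1 + 1 - 1) : K) * b (m + 1 + 1) *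
          a (m + 2 - (m + 1 + 1) + 1)) = 0 := by
      have h1 : m + 2 - (m + 1 + 1) + 1 = 1 := by omega
      rw [h1, ha]
      ring
    rw [htop, add_zero]
    apply Finset.sum_congr rfl
    intro p _
    ring
  · simp only [hj, if_false, mul_zero]
    rw [Finset.sum_const_zero]
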